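/- Let G = (V,E) be a connected bipartite simple graph and O an acyclic orientation of G that is not one of the two bipartite orientations. Then the number of linear extensions of the poset induced by O is strictly less than the number of linear extensions of the poset induced by a bipartite orientation of G. -/

import Mathlib

/-- An orientation of a simple graph `G`: a choice of direction for each edge. -/
structure GraphOrientation {V : Type*} (G : SimpleGraph V) where
  dir : V → V → Prop
  dir_adj : ∀ u v, dir u v → G.Adj u v
  adj_dir : ∀ u v, G.Adj u v → dir u v ∨ dir v u
  asymm : ∀ u v, dir u v → ¬ dir v u

/-- An orientation is acyclic if there is no directed cycle. -/
def GraphOrientation.Acyclic {V : Type*} {G : SimpleGraph V} (O : GraphOrientation G) : Prop :=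
  ∀ v, ¬ Relation.TransGen O.dir v v

/-- Linear extensions of the poset induced (by reachability) by an orientation:
bijective labelings of the vertices by `Fin (card V)` compatible with directed paths. -/
def GraphOrientation.LinExt {V : Type*} [Fintype V] {G : SimpleGraph V} (O : GraphOrientation G) :
    Type _ :=
  {f : V ≃ Fin (Fintype.card V) // ∀ u v, Relation.TransGen O.dir u v → f u < f v}

/-- The number of linear extensions of the poset induced by an orientation. -/
noncomputable def GraphOrientation.numLinExt {V : Type*} [Fintype V] {G : SimpleGraph V}
    (O : GraphOrientation G) : ℕ :=
  Nat.card O.LinExt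


namespace StachAux

open Finset

variable {V : Type*} [Fintype V] {G : SimpleGraph V}

/-- strictly compatible maps `V → {1,…,m}` -/
def SC (O : GraphOrientation G) (m : ℕ) : Type _ :=
  {f : V → ℕ // (∀ v, 1 ≤ f v ∧ f v ≤ m) ∧ ∀ u v, O.dir u v → f u < f v}

/-- maps `V → {1,…,m}` with all edge sums at most `m` -/
def TT (G : SimpleGraph V) (m : ℕ) : Type _ :=
  {g : V → ℕ // (∀ v, 1 ≤ g v ∧ g v ≤ m) ∧ ∀ u v, G.Adj u v → g u + g v ≤ m}

/-- `n`-subsets of `{1,…,m}` -/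
def Sub (n m : ℕ) : Type _ :=
  {s : Finset ℕ // s ⊆ Finset.Icc 1 m ∧ s.card = n}

/-- bounded functions with a marked collision -/
def Coll (V : Type*) (m : ℕ) : Type _ :=
  {p : (V × V) × (V → ℕ) // p.1.1 ≠ p.1.2 ∧ p.2 p.1.1 = p.2 p.1.2 ∧ ∀ v, p.2 v ≤ m}

lemma finite_bfun {P : (V → ℕ) → Prop} {m : ℕ} (h : ∀ f, P f → ∀ v, f v ≤ m) :
    Finite {f : V → ℕ // P f} := by
  apply Finite.of_injective (fun f => (fun v => (⟨f.1 v, Nat.lt_succ_of_le (h f.1 f.2 v)⟩ : Fin (m+1))))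
  intro f g hfg
  ext v
  exact congrArg Fin.val (congrFun hfg v)

instance (O : GraphOrientation G) (m : ℕ) : Finite (SC O m) :=
  finite_bfun (fun f hf v => (hf.1 v).2)

instance (m : ℕ) : Finite (TT G m) :=
  finite_bfun (fun f hf v => (hf.1 v).2)

instance (n m : ℕ) : Finite (Sub n m) := by
  apply Finite.of_injective
    (fun s => (⟨s.1, Finset.mem_powerset.2 s.2.1⟩ : {t // t ∈ (Finset.Icc 1 m).powerset}))
  intro s t hst
  exact Subtype.ext (by simpa using congrArg Subtype.val hst)

instance (m : ℕ) : Finite (Coll V m) := by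
  classical
  apply Finite.of_injective (fun p => ((p.1.1, fun v => (⟨p.1.2 v, Nat.lt_succ_of_le (p.2.2.2 v)⟩ : Fin (m+1))) :
    (V × V) × (V → Fin (m+1))))
  rintro ⟨⟨p1, f⟩, hp⟩ ⟨⟨q1, g⟩, hq⟩ h
  simp only [Prod.mk.injEq] at h
  refine Subtype.ext (Prod.ext h.1 ?_)
  ext v
  exact congrArg Fin.val (congrFun h.2 v)

instance (O : GraphOrientation G) : Finite O.LinExt := by
  have : Finite (V ≃ Fin (Fintype.card V)) :=
    Finite.of_injective (fun e => (e : V → Fin (Fintype.card V)))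
      (fun e₁ e₂ h => Equiv.coe_fn_injective h)
  exact Subtype.finite

/-- monotone maps on transitive closure from edge-compatibility -/
lemma transGen_lt {α : Type*} [Preorder α] (O : GraphOrientation G) (φ : V → α)
    (hφ : ∀ u v, O.dir u v → φ u < φ v) :
    ∀ u v, Relation.TransGen O.dir u v → φ u < φ v := by
  intro u v h
  induction h with
  | single h => exact hφ _ _ h
  | tail _ h ih => exact lt_trans ih (hφ _ _ h)

/-- L1: lower bound injection -/
lemma L1 (O : GraphOrientation G) (m : ℕ) :
    ∃ F : O.LinExt × Sub (Fintype.card V) m → SC O m, Function.Injective F := by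
  classical
  have hinj : ∀ (e : O.LinExt) (s : Sub (Fintype.card V) m),
      Function.Injective (fun v => ((s.1.orderIsoOfFin s.2.2 (e.1 v) : ℕ))) := by
    intro e s
    exact Subtype.val_injective.comp ((s.1.orderIsoOfFin s.2.2).injective.comp e.1.injective)
  have himg : ∀ (e : O.LinExt) (s : Sub (Fintype.card V) m),
      Finset.image (fun v => ((s.1.orderIsoOfFin s.2.2 (e.1 v) : ℕ))) Finset.univ = s.1 := by
    intro e s
    apply Finset.eq_of_subset_of_card_le
    · intro x hx
      simp only [Finset.mem_image, Finset.mem_univ, true_and] at hx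
      obtain ⟨v, rfl⟩ := hx
      exact (s.1.orderIsoOfFin s.2.2 (e.1 v)).2
    · rw [Finset.card_image_of_injective _ (hinj e s), Finset.card_univ]
      exact le_of_eq s.2.2
  refine ⟨fun p => ⟨fun v => ((p.2.1.orderIsoOfFin p.2.2.2 (p.1.1 v) : ℕ)), ⟨?_, ?_⟩⟩, ?_⟩
  · intro v
    exact Finset.mem_Icc.mp (p.2.2.1 (p.2.1.orderIsoOfFin p.2.2.2 (p.1.1 v)).2)
  · intro u v hd
    have h1 : p.1.1 u < p.1.1 v := p.1.2 u v (Relation.TransGen.single hd)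
    exact Subtype.coe_lt_coe.mpr ((p.2.1.orderIsoOfFin p.2.2.2).lt_iff_lt.mpr h1)
  · rintro ⟨e₁, s₁⟩ ⟨e₂, s₂⟩ h
    have hfun : (fun v => ((s₁.1.orderIsoOfFin s₁.2.2 (e₁.1 v) : ℕ)))
        = (fun v => ((s₂.1.orderIsoOfFin s₂.2.2 (e₂.1 v) : ℕ))) := congrArg Subtype.val h
    have hs : s₁ = s₂ := by
      apply Subtype.ext
      rw [← himg e₁ s₁, hfun, himg e₂ s₂]
    cases hs
    have he : e₁ = e₂ := by
      apply Subtype.ext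
      apply Equiv.ext
      intro v
      have h2 := congrFun hfun v
      exact (s₁.1.orderIsoOfFin s₁.2.2).injective (Subtype.ext h2)
    rw [he]

/-- L2: transfer map -/
lemma L2 (O : GraphOrientation G) (hO : O.Acyclic) (m : ℕ) :
    ∃ F : SC O m → TT G m, Function.Injective F ∧
      ∀ f u v w, O.dir u v → O.dir v w → (F f).1 u + (F f).1 v + (F f).1 w ≤ m := by
  classical
  set inSup : (V → ℕ) → V → ℕ :=
    fun f v => (Finset.univ.filter (fun u => O.dir u v)).sup f with hinSup
  have hle : ∀ (f : SC O m), ∀ v, inSup f.1 v < f.1 v := by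
    intro f v
    refine (Finset.sup_lt_iff (show (⊥:ℕ) < f.1 v from (f.2.1 v).1)).mpr ?_
    intro u hu
    exact f.2.2 u v (Finset.mem_filter.mp hu).2
  have hge : ∀ (f : SC O m), ∀ u v, O.dir u v → f.1 u ≤ inSup f.1 v := by
    intro f u v hd
    exact Finset.le_sup (Finset.mem_filter.mpr ⟨Finset.mem_univ u, hd⟩)
  have key : ∀ (f : SC O m), ∀ u v, O.dir u v → f.1 v - inSup f.1 v ≤ f.1 v - f.1 u := by
    intro f u v hd
    exact Nat.sub_le_sub_left (hge f u v hd) _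
  refine ⟨fun f => ⟨fun v => f.1 v - inSup f.1 v, ⟨?_, ?_⟩⟩, ?_, ?_⟩
  · intro v
    dsimp only
    have h1 := hle f v
    have h2 := (f.2.1 v).2
    constructor <;> omega
  · intro u v hadj
    dsimp only
    rcases O.adj_dir u v hadj with hd | hd
    · have h1 := key f u v hd
      have h2 : f.1 u - inSup f.1 u ≤ f.1 u := Nat.sub_le _ _
      have h3 := f.2.2 u v hd
      have h4 := (f.2.1 v).2
      omega
    · have h1 := key f v u hd
      have h2 : f.1 v - inSup f.1 v ≤ f.1 v := Nat.sub_le _ _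
      have h3 := f.2.2 v u hd
      have h4 := (f.2.1 u).2
      omega
  · intro f₁ f₂ h
    have hwf : WellFounded (Relation.TransGen O.dir) := by
      haveI : IsTrans V (Relation.TransGen O.dir) := ⟨fun a b c => Relation.TransGen.trans⟩
      haveI : IsIrrefl V (Relation.TransGen O.dir) := ⟨hO⟩
      exact Finite.wellFounded_of_trans_of_irrefl _
    apply Subtype.ext
    funext v
    induction v using hwf.induction with
    | _ v ih => ?_
    have hsup : inSup f₁.1 v = inSup f₂.1 v := by
      apply Finset.sup_congr rfl
      intro u hu
      exact ih u (Relation.TransGen.single (Finset.mem_filter.mp hu).2)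
    have h1 := congrFun (congrArg Subtype.val h) v
    dsimp only at h1
    have h2 := hle f₁ v
    have h3 := hle f₂ v
    omega
  · intro f u v w huv hvw
    dsimp only
    have h1 := key f u v huv
    have h2 := key f v w hvw
    have h3 := f.2.2 u v huv
    have h4 := f.2.2 v w hvw
    have h5 := (f.2.1 w).2
    have h6 : f.1 u - inSup f.1 u ≤ f.1 u := Nat.sub_le _ _
    omega

/-- L3: from edge-sum maps to maps compatible with the bipartite orientation -/
lemma L3 (V1 V2 : Set V) (hdisj : Disjoint V1 V2) (hunion : V1 ∪ V2 = Set.univ)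
    (hbip : ∀ u v, G.Adj u v → (u ∈ V1 ∧ v ∈ V2) ∨ (u ∈ V2 ∧ v ∈ V1))
    (Ob : GraphOrientation G) (hOb : ∀ u v, Ob.dir u v ↔ G.Adj u v ∧ u ∈ V1 ∧ v ∈ V2)
    (m : ℕ) :
    ∃ F : TT G m → SC Ob m, Function.Injective F := by
  classical
  set nbrSup : (V → ℕ) → V → ℕ :=
    fun g v => (Finset.univ.filter (fun u => G.Adj u v)).sup g with hns
  refine ⟨fun g => ⟨fun v => if v ∈ V1 then g.1 v else g.1 v + nbrSup g.1 v, ⟨?_, ?_⟩⟩, ?_⟩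
  · intro v
    dsimp only
    by_cases hv : v ∈ V1
    · simp only [if_pos hv]
      exact g.2.1 v
    · simp only [if_neg hv]
      have hb1 := (g.2.1 v).1
      have hb2 := (g.2.1 v).2
      rcases (Finset.univ.filter (fun u => G.Adj u v)).eq_empty_or_nonempty with hE | hNE
      · have hz : nbrSup g.1 v = 0 := by rw [hns]; dsimp only; rw [hE]; simp
        constructor <;> omega
      · obtain ⟨u₀, hu₀, hsup⟩ := Finset.exists_mem_eq_sup _ hNE g.1
        have hadj : G.Adj u₀ v := (Finset.mem_filter.mp hu₀).2
        have hsum := g.2.2 u₀ v hadj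
        have hsup' : nbrSup g.1 v = g.1 u₀ := by rw [hns]; exact hsup
        constructor <;> omega
  · intro u v hd
    dsimp only
    obtain ⟨hadj, hu1, hv2⟩ := (hOb u v).mp hd
    have hv1 : v ∉ V1 := Set.disjoint_right.mp hdisj hv2
    rw [if_pos hu1, if_neg hv1]
    have hle : g.1 u ≤ nbrSup g.1 v :=
      Finset.le_sup (Finset.mem_filter.mpr ⟨Finset.mem_univ u, hadj⟩)
    have := (g.2.1 v).1
    omega
  · intro g₁ g₂ h
    have hfun := congrArg Subtype.val h
    dsimp only at hfun
    apply Subtype.ext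
    funext v
    by_cases hv : v ∈ V1
    · have h1 := congrFun hfun v
      rw [if_pos hv, if_pos hv] at h1
      exact h1
    · have hnbr : ∀ u ∈ Finset.univ.filter (fun u => G.Adj u v), u ∈ V1 := by
        intro u hu
        have hadj := (Finset.mem_filter.mp hu).2
        rcases hbip u v hadj with h' | h'
        · exact h'.1
        · exact absurd h'.2 hv
      have hsup : nbrSup g₁.1 v = nbrSup g₂.1 v := by
        rw [hns]
        apply Finset.sup_congr rfl
        intro u hu
        have hu1 := hnbr u hu
        have h2 := congrFun hfun u
        rw [if_pos hu1, if_pos hu1] at h2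
        exact h2
      have h1 := congrFun hfun v
      rw [if_neg hv, if_neg hv, hsup] at h1
      omega

/-- L4a: injective strictly compatible maps inject into (linear extension, subset) pairs -/
lemma L4a (O : GraphOrientation G) (m : ℕ) :
    ∃ F : {f : SC O m // Function.Injective f.1} → O.LinExt × Sub (Fintype.card V) m,
      Function.Injective F := by
  classical
  have hsub : ∀ p : {f : SC O m // Function.Injective f.1},
      Finset.image p.1.1 Finset.univ ⊆ Finset.Icc 1 m := by
    intro p x hx
    obtain ⟨v, -, rfl⟩ := Finset.mem_image.mp hx
    exact Finset.mem_Icc.mpr (p.1.2.1 v)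
  have hcard : ∀ p : {f : SC O m // Function.Injective f.1},
      (Finset.image p.1.1 Finset.univ).card = Fintype.card V := by
    intro p
    rw [Finset.card_image_of_injective _ p.2, Finset.card_univ]
  set e : ∀ _p : {f : SC O m // Function.Injective f.1}, V → Fin (Fintype.card V) :=
    fun p v => ((Finset.image p.1.1 Finset.univ).orderIsoOfFin (hcard p)).symm
      ⟨p.1.1 v, Finset.mem_image_of_mem _ (Finset.mem_univ v)⟩ with he
  have hlt : ∀ p u v, p.1.1 u < p.1.1 v ↔ e p u < e p v := by
    intro p u v
    rw [he]
    dsimp only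
    constructor
    · intro h
      exact (OrderIso.lt_iff_lt _).mpr (Subtype.mk_lt_mk.mpr h)
    · intro h
      exact Subtype.mk_lt_mk.mp ((OrderIso.lt_iff_lt _).mp h)
  have hbij : ∀ p, Function.Bijective (e p) := by
    intro p
    rw [Fintype.bijective_iff_injective_and_card]
    refine ⟨?_, by simp⟩
    intro a b hab
    apply p.2
    have h2 := ((Finset.image p.1.1 Finset.univ).orderIsoOfFin (hcard p)).symm.injective hab
    exact congrArg Subtype.val h2
  have hval : ∀ p v, p.1.1 v =
      (((Finset.image p.1.1 Finset.univ).orderIsoOfFin (hcard p)) (e p v) : ℕ) := by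
    intro p v
    rw [he]
    simp
  have hcompat : ∀ p, ∀ u v, Relation.TransGen O.dir u v → e p u < e p v := by
    intro p
    exact transGen_lt O (e p) (fun u v hd => (hlt p u v).mp (p.1.2.2 u v hd))
  have hiso_congr : ∀ (s t : Finset ℕ) (_hst : s = t) (h1 : s.card = Fintype.card V)
      (h2 : t.card = Fintype.card V) (i : Fin (Fintype.card V)),
      ((s.orderIsoOfFin h1 i : ℕ)) = ((t.orderIsoOfFin h2 i : ℕ)) := by
    rintro s t rfl h1 h2 i
    rfl
  refine ⟨fun p => (⟨Equiv.ofBijective (e p) (hbij p), hcompat p⟩,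
      ⟨Finset.image p.1.1 Finset.univ, hsub p, hcard p⟩), ?_⟩
  intro p q hpq
  simp only [Prod.mk.injEq, Subtype.mk.injEq] at hpq
  have hs : Finset.image p.1.1 Finset.univ = Finset.image q.1.1 Finset.univ :=
    congrArg Subtype.val (congrArg Prod.snd hpq)
  have hE : ⇑(Equiv.ofBijective (e p) (hbij p)) = ⇑(Equiv.ofBijective (e q) (hbij q)) :=
    congrArg (fun E : O.LinExt => ⇑E.1) (congrArg Prod.fst hpq)
  apply Subtype.ext
  apply Subtype.ext
  funext v
  have hEv : e p v = e q v := congrFun hE v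
  rw [hval p v, hval q v, ← hEv]
  exact hiso_congr _ _ hs _ _ _

/-- L4b: non-injective maps inject into collisions -/
lemma L4b (O : GraphOrientation G) (m : ℕ) :
    ∃ F : {f : SC O m // ¬ Function.Injective f.1} → Coll V m, Function.Injective F := by
  classical
  refine ⟨fun p =>
    ⟨(((Function.not_injective_iff.mp p.2).choose,
       (Function.not_injective_iff.mp p.2).choose_spec.choose), p.1.1),
     (Function.not_injective_iff.mp p.2).choose_spec.choose_spec.2,
     (Function.not_injective_iff.mp p.2).choose_spec.choose_spec.1,
     fun v => (p.1.2.1 v).2⟩, ?_⟩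
  intro p q hpq
  have h2 : p.1.1 = q.1.1 := congrArg Prod.snd (congrArg Subtype.val hpq)
  exact Subtype.ext (Subtype.ext h2)

/-- L4: upper bound injection -/
lemma L4 (O : GraphOrientation G) (m : ℕ) :
    ∃ F : SC O m → (O.LinExt × Sub (Fintype.card V) m) ⊕ Coll V m, Function.Injective F := by
  classical
  obtain ⟨F1, hF1⟩ := L4a O m
  obtain ⟨F2, hF2⟩ := L4b O m
  refine ⟨(Sum.map F1 F2) ∘
    (Equiv.sumCompl (fun f : SC O m => Function.Injective f.1)).symm, ?_⟩
  exact (hF1.sumMap hF2).comp (Equiv.injective _)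

/-- L5: collision count bound -/
lemma L5 (m : ℕ) :
    Nat.card (Coll V m) ≤ Fintype.card V * (Fintype.card V * (m+1) ^ (Fintype.card V - 1)) := by
  classical
  have hcard : Nat.card (Σ _b : V, V × ({x : V // ¬ x = _b} → Fin (m+1))) =
      Fintype.card V * (Fintype.card V * (m+1) ^ (Fintype.card V - 1)) := by
    rw [Nat.card_eq_fintype_card, Fintype.card_sigma]
    have hb : ∀ b : V, Fintype.card (V × ({x : V // ¬ x = b} → Fin (m+1)))
        = Fintype.card V * (m+1) ^ (Fintype.card V - 1) := by
      intro b
      rw [Fintype.card_prod, Fintype.card_fun, Fintype.card_fin]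
      congr 2
      rw [Fintype.card_subtype_compl, Fintype.card_subtype_eq]
    rw [Finset.sum_congr rfl (fun b _ => hb b), Finset.sum_const, Finset.card_univ,
      smul_eq_mul]
  rw [← hcard]
  have hF : ∃ F : Coll V m → (Σ _b : V, V × ({x : V // ¬ x = _b} → Fin (m+1))),
      Function.Injective F := by
    refine ⟨fun c => ⟨c.1.1.2, (c.1.1.1,
      fun x => ⟨c.1.2 x.1, Nat.lt_succ_of_le (c.2.2.2 x.1)⟩)⟩, ?_⟩
    rintro ⟨⟨⟨a₁, b₁⟩, f₁⟩, hne₁, hcol₁, hb₁⟩ ⟨⟨⟨a₂, b₂⟩, f₂⟩, hne₂, hcol₂, hb₂⟩ h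
    dsimp only at hne₁ hcol₁ hb₁ hne₂ hcol₂ hb₂
    obtain ⟨h1, h2⟩ := Sigma.mk.inj_iff.mp h
    subst h1
    rw [heq_iff_eq, Prod.mk.injEq] at h2
    obtain ⟨h2a, h3⟩ := h2
    dsimp only at h2a
    subst h2a
    have hfv : ∀ x : V, ¬ x = b₁ → f₁ x = f₂ x := by
      intro x hx
      exact congrArg Fin.val (congrFun h3 ⟨x, hx⟩)
    have hfun : f₁ = f₂ := by
      funext x
      by_cases hx : x = b₁
      · subst hx
        rw [← hcol₁, ← hcol₂]
        exact hfv a₁ hne₁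
      · exact hfv x hx
    subst hfun
    rfl

  obtain ⟨F, hF⟩ := hF
  exact Nat.card_le_card_of_injective F hF

/-- L7: existence of a directed 2-path -/
lemma L7 (hconn : G.Connected) (V1 V2 : Set V) (hdisj : Disjoint V1 V2)
    (hunion : V1 ∪ V2 = Set.univ)
    (hbip : ∀ u v, G.Adj u v → (u ∈ V1 ∧ v ∈ V2) ∨ (u ∈ V2 ∧ v ∈ V1))
    (O : GraphOrientation G)
    (hnotbip : ¬ (∀ u v, O.dir u v → u ∈ V1 ∧ v ∈ V2) ∧
               ¬ (∀ u v, O.dir u v → u ∈ V2 ∧ v ∈ V1)) :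
    ∃ u v w, O.dir u v ∧ O.dir v w := by
  by_contra h2
  push_neg at h2
  -- every vertex is a pure source or pure sink
  set Src : V → Prop := fun v => ∃ w, O.dir v w with hSrc
  have keyA : ∀ u v, G.Adj u v → ((u ∈ V1 ↔ Src u) ↔ (v ∈ V1 ↔ Src v)) := by
    intro u v huv
    have hsides := hbip u v huv
    have hd1 : u ∈ V1 → u ∉ V2 := fun h => Set.disjoint_left.mp hdisj h
    have hd2 : u ∈ V2 → u ∉ V1 := fun h => Set.disjoint_right.mp hdisj h
    have hd3 : v ∈ V1 → v ∉ V2 := fun h => Set.disjoint_left.mp hdisj h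
    have hd4 : v ∈ V2 → v ∉ V1 := fun h => Set.disjoint_right.mp hdisj h
    rcases O.adj_dir u v huv with hd | hd
    · have hsu : Src u := ⟨v, hd⟩
      have hsv : ¬ Src v := fun hv => by
        obtain ⟨w, hw⟩ := hv
        exact h2 u v w hd hw
      rcases hsides with ⟨h1, h1'⟩ | ⟨h1, h1'⟩ <;> tauto
    · have hsv : Src v := ⟨u, hd⟩
      have hsu : ¬ Src u := fun hu => by
        obtain ⟨w, hw⟩ := hu
        exact h2 v u w hd hw
      rcases hsides with ⟨h1, h1'⟩ | ⟨h1, h1'⟩ <;> tauto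
  have keyC : ∀ u v : V, ((u ∈ V1 ↔ Src u) ↔ (v ∈ V1 ↔ Src v)) := by
    intro u v
    obtain ⟨p⟩ := hconn.preconnected u v
    induction p with
    | nil => exact Iff.rfl
    | cons h p ih => exact (keyA _ _ h).trans ih
  obtain ⟨a, b, hab, hab'⟩ : ∃ a b, O.dir a b ∧ ¬(a ∈ V1 ∧ b ∈ V2) := by
    by_contra hcon
    push_neg at hcon
    exact hnotbip.1 hcon
  obtain ⟨c, d, hcd, hcd'⟩ : ∃ c d, O.dir c d ∧ ¬(c ∈ V2 ∧ d ∈ V1) := by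
    by_contra hcon
    push_neg at hcon
    exact hnotbip.2 hcon
  have ha2 : a ∈ V2 ∧ b ∈ V1 := by
    rcases hbip a b (O.dir_adj a b hab) with h | h
    · exact absurd h hab'
    · exact h
  have hc1 : c ∈ V1 ∧ d ∈ V2 := by
    rcases hbip c d (O.dir_adj c d hcd) with h | h
    · exact h
    · exact absurd h hcd'
  have hSa : Src a := ⟨b, hab⟩
  have hSc : Src c := ⟨d, hcd⟩
  have hanot : a ∉ V1 := Set.disjoint_right.mp hdisj ha2.1
  have := keyC a c
  tauto

/-- L6: many gap points -/
lemma L6 (u₀ v₀ w₀ : V) (hu : u₀ ≠ v₀) (hv : v₀ ≠ w₀) (hw : u₀ ≠ w₀)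
    (hadj1 : G.Adj u₀ v₀) (hadj2 : G.Adj v₀ w₀) (k : ℕ) :
    (k : ℕ) ^ (Fintype.card V) ≤
      Nat.card {g : TT G (6*k) // 6*k < g.1 u₀ + g.1 v₀ + g.1 w₀} := by
  classical
  set s₀ : Finset V := {u₀, v₀, w₀} with hs₀
  have hcard3 : s₀.card = 3 := Finset.card_eq_three.mpr ⟨u₀, v₀, w₀, hu, hw, hv, rfl⟩
  have hn3 : 3 ≤ Fintype.card V := by
    calc 3 = s₀.card := hcard3.symm
    _ ≤ Finset.univ.card := Finset.card_le_univ s₀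
    _ = Fintype.card V := Finset.card_univ
  set D := (Fin k × Fin k × Fin k) × ({x : V // ¬ x ∈ s₀} → Fin (3*k)) with hD
  -- the map
  set mk : D → V → ℕ := fun p x =>
    if hx : x = u₀ then 2*k+1+(p.1.1 : ℕ)
    else if hy : x = v₀ then 2*k+1+(p.1.2.1 : ℕ)
    else if hz : x = w₀ then 2*k+1+(p.1.2.2 : ℕ)
    else 1 + (p.2 ⟨x, by simp [hs₀, hx, hy, hz]⟩ : ℕ) with hmk
  have hb1 : ∀ z : Fin k, 2*k+1+(z:ℕ) ≤ 3*k := fun z => by have := z.2; omega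
  have hb2 : ∀ z : Fin (3*k), 1 + (z:ℕ) ≤ 3*k := fun z => by have := z.2; omega
  have hub : ∀ p x, mk p x ≤ 3*k := by
    intro p x
    rw [hmk]
    dsimp only
    split
    · exact hb1 _
    · split
      · exact hb1 _
      · split
        · exact hb1 _
        · exact hb2 _
  have hlb : ∀ p x, 1 ≤ mk p x := by
    intro p x
    rw [hmk]
    dsimp only
    split
    · omega
    · split
      · omega
      · split
        · omega
        · omega
  have hmem : ∀ p : D, (∀ v, 1 ≤ mk p v ∧ mk p v ≤ 6*k) ∧
      ∀ u v, G.Adj u v → mk p u + mk p v ≤ 6*k := by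
    intro p
    constructor
    · intro v
      have h1 := hlb p v
      have h2 := hub p v
      constructor <;> omega
    · intro u v _
      have h1 := hub p u
      have h2 := hub p v
      omega
  have hgap : ∀ p : D, 6*k < mk p u₀ + mk p v₀ + mk p w₀ := by
    intro p
    rw [hmk]
    dsimp only
    rw [dif_pos rfl, dif_neg (Ne.symm hu), dif_pos rfl, dif_neg (Ne.symm hw),
      dif_neg (Ne.symm hv), dif_pos rfl]
    omega
  have hinj : Function.Injective (fun p : D =>
      (⟨⟨mk p, hmem p⟩, hgap p⟩ : {g : TT G (6*k) // 6*k < g.1 u₀ + g.1 v₀ + g.1 w₀})) := by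
    intro p q h
    have hfun : mk p = mk q := congrArg Subtype.val (congrArg Subtype.val h)
    have hval : ∀ x, mk p x = mk q x := congrFun hfun
    have h1 : p.1.1 = q.1.1 := by
      have := hval u₀
      rw [hmk] at this
      dsimp only at this
      rw [dif_pos rfl, dif_pos rfl] at this
      exact Fin.ext (by omega)
    have h2 : p.1.2.1 = q.1.2.1 := by
      have := hval v₀
      rw [hmk] at this
      dsimp only at this
      rw [dif_neg (Ne.symm hu), dif_pos rfl, dif_neg (Ne.symm hu), dif_pos rfl] at this
      exact Fin.ext (by omega)
    have h3 : p.1.2.2 = q.1.2.2 := by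
      have := hval w₀
      rw [hmk] at this
      dsimp only at this
      rw [dif_neg (Ne.symm hw), dif_neg (Ne.symm hv), dif_pos rfl,
        dif_neg (Ne.symm hw), dif_neg (Ne.symm hv), dif_pos rfl] at this
      exact Fin.ext (by omega)
    have h4 : p.2 = q.2 := by
      funext x
      obtain ⟨x, hxmem⟩ := x
      have hx1 : ¬ x = u₀ := by
        intro hc; apply hxmem; simp [hs₀, hc]
      have hx2 : ¬ x = v₀ := by
        intro hc; apply hxmem; simp [hs₀, hc]
      have hx3 : ¬ x = w₀ := by
        intro hc; apply hxmem; simp [hs₀, hc]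
      have hxx := hval x
      rw [hmk] at hxx
      dsimp only at hxx
      rw [dif_neg hx1, dif_neg hx2, dif_neg hx3, dif_neg hx1, dif_neg hx2, dif_neg hx3]
        at hxx
      exact Fin.ext (by omega)
    exact Prod.ext (Prod.ext h1 (Prod.ext h2 h3)) h4
  have hcardD : Nat.card D = k * (k * (k * (3*k) ^ (Fintype.card V - 3))) := by
    rw [hD, Nat.card_prod, Nat.card_prod, Nat.card_prod, Nat.card_fun,
      Nat.card_eq_fintype_card (α := Fin k), Fintype.card_fin,
      Nat.card_eq_fintype_card (α := Fin (3*k)), Fintype.card_fin,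
      Nat.card_eq_fintype_card (α := {x : V // ¬ x ∈ s₀}),
      Fintype.card_subtype_compl, Fintype.card_coe, hcard3]
    ring
  have hle : Nat.card D ≤ Nat.card {g : TT G (6*k) // 6*k < g.1 u₀ + g.1 v₀ + g.1 w₀} :=
    Nat.card_le_card_of_injective _ hinj
  refine le_trans ?_ hle
  have hkn : k ^ Fintype.card V = k * (k * (k * k ^ (Fintype.card V - 3))) := by
    have h3 : Fintype.card V = 3 + (Fintype.card V - 3) := by omega
    nth_rewrite 1 [h3]
    rw [pow_add]
    ring
  rw [hcardD, hkn]
  have hpow : k ^ (Fintype.card V - 3) ≤ (3*k) ^ (Fintype.card V - 3) :=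
    Nat.pow_le_pow_left (by omega) _
  exact Nat.mul_le_mul_left _ (Nat.mul_le_mul_left _ (Nat.mul_le_mul_left _ hpow))

/-- Main lemma, for the bipartite orientation from `V1` to `V2`. -/
lemma main_lemma (hconn : G.Connected)
    (V1 V2 : Set V) (hdisj : Disjoint V1 V2) (hunion : V1 ∪ V2 = Set.univ)
    (hbip : ∀ u v, G.Adj u v → (u ∈ V1 ∧ v ∈ V2) ∨ (u ∈ V2 ∧ v ∈ V1))
    (O Ob : GraphOrientation G) (hO : O.Acyclic)
    (hOb : ∀ u v, Ob.dir u v ↔ G.Adj u v ∧ u ∈ V1 ∧ v ∈ V2)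
    (hnotbip : ¬ (∀ u v, O.dir u v → u ∈ V1 ∧ v ∈ V2) ∧
               ¬ (∀ u v, O.dir u v → u ∈ V2 ∧ v ∈ V1)) :
    O.numLinExt < Ob.numLinExt := by
  classical
  set n := Fintype.card V with hn
  obtain ⟨u₀, v₀, w₀, h1, h2⟩ := L7 hconn V1 V2 hdisj hunion hbip O hnotbip
  have hadj1 := O.dir_adj _ _ h1
  have hadj2 := O.dir_adj _ _ h2
  have hu : u₀ ≠ v₀ := G.ne_of_adj hadj1
  have hv : v₀ ≠ w₀ := G.ne_of_adj hadj2
  have hw : u₀ ≠ w₀ := by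
    intro hc
    rw [hc] at h1
    exact O.asymm _ _ h1 h2
  have hn1 : 1 ≤ n := Fintype.card_pos_iff.mpr ⟨u₀⟩
  by_contra hcon
  push_neg at hcon
  have hcon' : Nat.card Ob.LinExt ≤ Nat.card O.LinExt := hcon
  have master : ∀ k : ℕ, k ^ n ≤ n * (n * (6*k+1) ^ (n-1)) := by
    intro k
    obtain ⟨F1, hF1⟩ := L1 O (6*k)
    obtain ⟨F2, hF2, hF2t⟩ := L2 O hO (6*k)
    obtain ⟨F3, hF3⟩ := L3 V1 V2 hdisj hunion hbip Ob hOb (6*k)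
    obtain ⟨F4, hF4⟩ := L4 Ob (6*k)
    have hGapInj : Function.Injective
        (Sum.elim (fun p => F2 (F1 p)) (fun g => g.1) :
          (O.LinExt × Sub n (6*k)) ⊕ {g : TT G (6*k) // 6*k < g.1 u₀ + g.1 v₀ + g.1 w₀}
            → TT G (6*k)) := by
      rintro (p | g) (q | g') h <;> simp only [Sum.elim_inl, Sum.elim_inr] at h
      · exact congrArg Sum.inl (hF1 (hF2 h))
      · exfalso
        have ht := hF2t (F1 p) u₀ v₀ w₀ h1 h2
        rw [h] at ht
        have := g'.2
        omega
      · exfalso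
        have ht := hF2t (F1 q) u₀ v₀ w₀ h1 h2
        rw [← h] at ht
        have := g.2
        omega
      · exact congrArg Sum.inr (Subtype.ext h)
    have c1 : Nat.card ((O.LinExt × Sub n (6*k)) ⊕
        {g : TT G (6*k) // 6*k < g.1 u₀ + g.1 v₀ + g.1 w₀}) ≤ Nat.card (TT G (6*k)) :=
      Nat.card_le_card_of_injective _ hGapInj
    rw [Nat.card_sum, Nat.card_prod] at c1
    have c2 : Nat.card (TT G (6*k)) ≤ Nat.card (SC Ob (6*k)) :=
      Nat.card_le_card_of_injective F3 hF3
    have c3 : Nat.card (SC Ob (6*k)) ≤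
        Nat.card ((Ob.LinExt × Sub n (6*k)) ⊕ Coll V (6*k)) :=
      Nat.card_le_card_of_injective F4 hF4
    rw [Nat.card_sum, Nat.card_prod] at c3
    have c4 := L6 u₀ v₀ w₀ hu hv hw hadj1 hadj2 k
    have c5 := L5 (V := V) (6*k)
    rw [← hn] at c4 c5
    have c6 : Nat.card Ob.LinExt * Nat.card (Sub n (6*k)) ≤
        Nat.card O.LinExt * Nat.card (Sub n (6*k)) :=
      Nat.mul_le_mul_right _ hcon'
    omega
  set K := n * (n * 7^(n-1)) + 1 with hK
  have hKmaster := master K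
  have e2 : (6*K+1)^(n-1) ≤ (7*K)^(n-1) := Nat.pow_le_pow_left (by omega) _
  have e3 : (7*K)^(n-1) = 7^(n-1) * K^(n-1) := mul_pow _ _ _
  have e4 : n * (n * (7^(n-1) * K^(n-1))) = (n * (n * 7^(n-1))) * K^(n-1) := by ring
  have e5 : K^n = K * K^(n-1) := by
    have h3 : n = 1 + (n-1) := by omega
    nth_rewrite 1 [h3]
    rw [pow_add, pow_one]
  have e6 : 1 ≤ K^(n-1) := Nat.one_le_pow _ _ (by omega)
  have e7 : n * (n * 7^(n-1)) * K^(n-1) < K * K^(n-1) :=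
    Nat.mul_lt_mul_of_lt_of_le (by omega) le_rfl (by omega)
  have e8 : n * (n * (6*K+1)^(n-1)) ≤ n * (n * (7^(n-1) * K^(n-1)))  := by
    have := le_trans e2 (le_of_eq e3)
    exact Nat.mul_le_mul_left _ (Nat.mul_le_mul_left _ this)
  omega

end StachAux

theorem stmt_1 {V : Type*} [Fintype V] (G : SimpleGraph V) (hconn : G.Connected)
    (V1 V2 : Set V) (hdisj : Disjoint V1 V2) (hunion : V1 ∪ V2 = Set.univ)
    (hbip : ∀ u v, G.Adj u v → (u ∈ V1 ∧ v ∈ V2) ∨ (u ∈ V2 ∧ v ∈ V1))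
    (O Ob : GraphOrientation G) (hO : O.Acyclic)
    (hOb : (∀ u v, Ob.dir u v ↔ G.Adj u v ∧ u ∈ V1 ∧ v ∈ V2) ∨
           (∀ u v, Ob.dir u v ↔ G.Adj u v ∧ u ∈ V2 ∧ v ∈ V1))
    (hnotbip : ¬ (∀ u v, O.dir u v → u ∈ V1 ∧ v ∈ V2) ∧
               ¬ (∀ u v, O.dir u v → u ∈ V2 ∧ v ∈ V1)) :
    O.numLinExt < Ob.numLinExt := by
  rcases hOb with hOb | hOb
  · exact StachAux.main_lemma hconn V1 V2 hdisj hunion hbip O Ob hO hOb hnotbip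
  · refine StachAux.main_lemma hconn V2 V1 hdisj.symm ?_
      (fun u v h => Or.symm (hbip u v h)) O Ob hO hOb ⟨hnotbip.2, hnotbip.1⟩
    rw [Set.union_comm]
    exact hunion
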